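/- If a real Banach space X admits a quotient which is isomorphic to ℓ₁ (i.e., there is a bounded linear surjection from X onto a Banach space linearly homeomorphic to ℓ₁), then X has property (F̄). -/

import Mathlib

set_option maxSynthPendingDepth 3

open Filter Topology Metric NormedSpace Function

/-- `u` is a finite-rank operator: its range is finite-dimensional. -/
def FinRankOp {X Y : Type*} [NormedAddCommGroup X] [NormedSpace ℝ X]
    [NormedAddCommGroup Y] [NormedSpace ℝ Y] (u : X →L[ℝ] Y) : Prop :=
  FiniteDimensional ℝ (LinearMap.range (u : X →ₗ[ℝ] Y))

/-- `u` is approximable: a limit in operator norm of finite-rank operators. -/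
def ApproxOp {X Y : Type*} [NormedAddCommGroup X] [NormedSpace ℝ X]
    [NormedAddCommGroup Y] [NormedSpace ℝ Y] (u : X →L[ℝ] Y) : Prop :=
  u ∈ closure {f : X →L[ℝ] Y | FinRankOp f}

/-- `u` is a compact operator: it maps the closed unit ball to a relatively compact set. -/
def CompactOp {X Y : Type*} [NormedAddCommGroup X] [NormedSpace ℝ X]
    [NormedAddCommGroup Y] [NormedSpace ℝ Y] (u : X →L[ℝ] Y) : Prop :=
  IsCompact (closure (u '' Metric.closedBall 0 1))

/-- Property (𝒦): every compact subset is contained in the closure of the image of the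
closed unit ball under some compact operator `X → X`. -/
def PropertyK (X : Type*) [NormedAddCommGroup X] [NormedSpace ℝ X] : Prop :=
  ∀ K : Set X, IsCompact K →
    ∃ v : X →L[ℝ] X, CompactOp v ∧ K ⊆ closure (v '' Metric.closedBall 0 1)

/-- Property (F̄): every compact subset is contained in the closure of the image of the
closed unit ball under some approximable operator `X → X`. -/
def PropertyF (X : Type*) [NormedAddCommGroup X] [NormedSpace ℝ X] : Prop :=
  ∀ K : Set X, IsCompact K →
    ∃ v : X →L[ℝ] X, ApproxOp v ∧ K ⊆ closure (v '' Metric.closedBall 0 1)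

/-- The Banach space ℓ₁ of absolutely summable real sequences. -/
noncomputable abbrev ellOne : Type := lp (fun _ : ℕ => ℝ) 1

set_option linter.unusedSectionVars false

section Aux
variable {X Y Z : Type*} [NormedAddCommGroup X] [NormedSpace ℝ X]
    [NormedAddCommGroup Y] [NormedSpace ℝ Y] [NormedAddCommGroup Z] [NormedSpace ℝ Z]

noncomputable def coordL (n : ℕ) : ellOne →L[ℝ] ℝ :=
  LinearMap.mkContinuous
    { toFun := fun a => a n
      map_add' := fun a b => by simp [lp.coeFn_add]
      map_smul' := fun c a => by simp [lp.coeFn_smul] }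
    1 (fun a => by
      rw [one_mul]; exact lp.norm_apply_le_norm one_ne_zero a n)

lemma coordL_apply (n : ℕ) (a : ellOne) : coordL n a = a n := rfl

lemma coordL_single (n k : ℕ) (c : ℝ) :
    coordL n (lp.single 1 k c) = if n = k then c else 0 := by
  rw [coordL_apply, lp.single_apply]
  split_ifs with h <;> simp [h]

lemma finRankOp_of_range_le {u : X →L[ℝ] Y} {s : Set Y} (hs : s.Finite)
    (h : ∀ x, u x ∈ Submodule.span ℝ s) : FinRankOp u := by
  have : LinearMap.range (u : X →ₗ[ℝ] Y) ≤ Submodule.span ℝ s := by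
    rintro y ⟨x, rfl⟩; exact h x
  have hfd : FiniteDimensional ℝ (Submodule.span ℝ s) := FiniteDimensional.span_of_finite ℝ hs
  exact Submodule.finiteDimensional_of_le this

lemma FinRankOp.comp_right {u : Y →L[ℝ] Z} (hu : FinRankOp u) (s : X →L[ℝ] Y) :
    FinRankOp (u.comp s) := by
  haveI : FiniteDimensional ℝ (LinearMap.range (u : Y →ₗ[ℝ] Z)) := hu
  have h : LinearMap.range ((u.comp s : X →L[ℝ] Z) : X →ₗ[ℝ] Z) ≤ LinearMap.range (u : Y →ₗ[ℝ] Z) := by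
    rintro z ⟨x, rfl⟩; exact ⟨s x, rfl⟩
  exact Submodule.finiteDimensional_of_le h

lemma ApproxOp.comp_right {u : Y →L[ℝ] Z} (hu : ApproxOp u) (s : X →L[ℝ] Y) :
    ApproxOp (u.comp s) := by
  have hc : Continuous fun R : Y →L[ℝ] Z => R.comp s :=
    ((ContinuousLinearMap.compL ℝ X Y Z).flip s).continuous
  exact map_mem_closure (f := fun R : Y →L[ℝ] Z => R.comp s) (x := u)
    (s := {f : Y →L[ℝ] Z | FinRankOp f}) (t := {f : X →L[ℝ] Z | FinRankOp f})
    hc hu (fun R hR => FinRankOp.comp_right hR s)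

lemma approxOp_of_partial_sums {T : X →L[ℝ] Y} {F : ℕ → (X →L[ℝ] Y)}
    (hfin : ∀ n, FinRankOp (∑ i ∈ Finset.range n, F i))
    (hT : Filter.Tendsto (fun n => ∑ i ∈ Finset.range n, F i) atTop (𝓝 T)) : ApproxOp T :=
  mem_closure_of_tendsto hT (Filter.Eventually.of_forall hfin)

lemma exists_net {C : Set X} (hC : IsCompact C) {ε : ℝ} (hε : 0 < ε) :
    ∃ (m : ℕ) (g : ℕ → X), (∀ j < m, g j ∈ C) ∧ ∀ k ∈ C, ∃ j < m, ‖k - g j‖ ≤ ε := by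
  obtain ⟨t, htC, htfin, hcov⟩ :=
    Metric.finite_approx_of_totallyBounded hC.totallyBounded ε hε
  obtain ⟨l, hl⟩ : ∃ l : List X, ∀ y, y ∈ t ↔ y ∈ l := by
    refine ⟨htfin.toFinset.toList, fun y => ?_⟩
    rw [Finset.mem_toList, Set.Finite.mem_toFinset]
  refine ⟨l.length, fun j => l.getD j 0, ?_, ?_⟩
  · intro j hj
    have : l.getD j 0 ∈ l := by
      rw [List.getD_eq_getElem l 0 hj]; exact List.getElem_mem _
    exact htC ((hl _).mpr this)
  · intro k hk
    obtain ⟨y, hyt, hy⟩ := Set.mem_iUnion₂.1 (hcov hk)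
    obtain ⟨j, hj, rfl⟩ := List.mem_iff_getElem.1 ((hl y).mp hyt)
    refine ⟨j, hj, ?_⟩
    show ‖k - l.getD j 0‖ ≤ ε
    rw [List.getD_eq_getElem l 0 hj]
    rw [mem_ball, dist_eq_norm] at hy
    exact hy.le

lemma step_lemma {C : Set X} (hC : IsCompact C) {δ : ℝ} (hδ : 0 < δ)
    (hCb : C ⊆ closedBall 0 δ) :
    ∃ (m : ℕ) (g : ℕ → X) (C' : Set X), IsCompact C' ∧ C' ⊆ closedBall 0 (δ / 4) ∧
      (∀ j < m, ‖g j‖ ≤ δ) ∧ ∀ k ∈ C, ∃ j < m, k - g j ∈ C' := by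
  obtain ⟨m, g, hgC, hnet⟩ := exists_net hC (show (0:ℝ) < δ / 4 by linarith)
  refine ⟨m, g, (⋃ j ∈ Finset.range m, (fun k => k - g j) '' C) ∩ closedBall 0 (δ / 4),
    ?_, Set.inter_subset_right, ?_, ?_⟩
  · refine IsCompact.inter_right ?_ Metric.isClosed_closedBall
    refine (Finset.range m).isCompact_biUnion (fun j _ => ?_)
    exact hC.image (continuous_id.sub continuous_const)
  · intro j hj
    have := hCb (hgC j hj)
    simpa [mem_closedBall, dist_eq_norm] using this
  · intro k hk
    obtain ⟨j, hj, hjk⟩ := hnet k hk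
    refine ⟨j, hj, ⟨Set.mem_biUnion (Finset.mem_range.2 hj) ⟨k, hk, rfl⟩, ?_⟩⟩
    simpa [mem_closedBall, dist_eq_norm] using hjk

lemma exists_blocks {K : Set X} (hK : IsCompact K) {r : ℝ} (hr : 0 < r)
    (hKr : K ⊆ closedBall 0 r) :
    ∃ (m : ℕ → ℕ) (g : ℕ → ℕ → X) (C : ℕ → Set X),
      C 0 = K ∧ (∀ n, C n ⊆ closedBall 0 (r / 4 ^ n)) ∧
      (∀ n, ∀ j < m n, ‖g n j‖ ≤ r / 4 ^ n) ∧
      (∀ n, ∀ k ∈ C n, ∃ j < m n, k - g n j ∈ C (n + 1)) := by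
  have hstep : ∀ (n : ℕ) (C : Set X), ∃ (m : ℕ) (g : ℕ → X) (C' : Set X),
      (IsCompact C → C ⊆ closedBall 0 (r / 4 ^ n) →
        IsCompact C' ∧ C' ⊆ closedBall 0 (r / 4 ^ (n + 1)) ∧
        (∀ j < m, ‖g j‖ ≤ r / 4 ^ n) ∧ ∀ k ∈ C, ∃ j < m, k - g j ∈ C') := by
    intro n C
    by_cases h : IsCompact C ∧ C ⊆ closedBall 0 (r / 4 ^ n)
    · obtain ⟨m, g, C', h1, h2, h3, h4⟩ := step_lemma h.1 (div_pos hr (by positivity)) h.2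
      refine ⟨m, g, C', fun _ _ => ⟨h1, ?_, h3, h4⟩⟩
      have he : r / 4 ^ n / 4 = r / 4 ^ (n + 1) := by rw [pow_succ]; ring
      rwa [he] at h2
    · exact ⟨0, fun _ => 0, ∅, fun hc hb => absurd ⟨hc, hb⟩ h⟩
  choose M G Cf hf using hstep
  set C : ℕ → Set X := fun n => Nat.rec K (fun n Cn => Cf n Cn) n with hC
  have hinv : ∀ n, IsCompact (C n) ∧ C n ⊆ closedBall 0 (r / 4 ^ n) := by
    intro n
    induction n with
    | zero => exact ⟨hK, by show K ⊆ closedBall 0 (r / 4 ^ 0); simpa using hKr⟩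
    | succ n ih =>
      obtain ⟨h1, h2, _, _⟩ := hf n (C n) ih.1 ih.2
      exact ⟨h1, h2⟩
  refine ⟨fun n => M n (C n), fun n => G n (C n), C, rfl, fun n => (hinv n).2, ?_, ?_⟩
  · intro n; exact (hf n (C n) (hinv n).1 (hinv n).2).2.2.1
  · intro n; exact (hf n (C n) (hinv n).1 (hinv n).2).2.2.2

lemma sum_abs_coord_le (a : ellOne) (s : Finset ℕ) (f : ℕ → ℕ)
    (hf : Set.InjOn f s) : ∑ j ∈ s, |a (f j)| ≤ ‖a‖ := by
  have h := lp.sum_rpow_le_norm_rpow (p := 1) (f := a)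
    (by simp : (0:ℝ) < (1 : ENNReal).toReal) (s.image f)
  simp only [ENNReal.toReal_one, Real.rpow_one] at h
  rw [Finset.sum_image (fun x hx y hy h' => hf hx hy h')] at h
  simpa only [Real.norm_eq_abs] using h

lemma key {X : Type*} [NormedAddCommGroup X] [NormedSpace ℝ X] [CompleteSpace X]
    {K : Set X} (hK : IsCompact K) :
    ∃ T : ellOne →L[ℝ] X, ApproxOp T ∧ K ⊆ closure (T '' closedBall 0 1) := by
  classical
  -- bound K
  obtain ⟨r0, hr0⟩ := hK.isBounded.subset_closedBall 0
  set r : ℝ := max r0 1 with hrdef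
  have hr : 0 < r := lt_of_lt_of_le one_pos (le_max_right _ _)
  have hKr : K ⊆ closedBall 0 r := hr0.trans (closedBall_subset_closedBall (le_max_left _ _))
  obtain ⟨m, g, C, hC0, hCb, hgb, hstep⟩ := exists_blocks hK hr hKr
  -- the block operators
  set y : ℕ → ℕ → X := fun i j => ((2:ℝ) * 3 ^ i) • g i j with hy
  set F : ℕ → (ellOne →L[ℝ] X) := fun i =>
    ∑ j ∈ Finset.range (m i), (coordL (Nat.pair i j)).smulRight (y i j) with hF
  have hyb : ∀ i, ∀ j < m i, ‖y i j‖ ≤ 2 * r * (3 / 4) ^ i := by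
    intro i j hj
    have h1 : ‖g i j‖ ≤ r / 4 ^ i := hgb i j hj
    have : ‖y i j‖ = (2 * 3 ^ i) * ‖g i j‖ := by
      rw [hy]; rw [norm_smul, Real.norm_eq_abs, abs_of_pos (by positivity)]
    rw [this]
    calc (2 * 3 ^ i) * ‖g i j‖ ≤ (2 * 3 ^ i) * (r / 4 ^ i) := by
          apply mul_le_mul_of_nonneg_left h1 (by positivity)
      _ = 2 * r * (3 / 4) ^ i := by rw [div_pow]; ring
  have hFapply : ∀ i (a : ellOne), F i a = ∑ j ∈ Finset.range (m i), a (Nat.pair i j) • y i j := by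
    intro i a
    rw [hF]
    simp [ContinuousLinearMap.sum_apply, ContinuousLinearMap.smulRight_apply, coordL_apply]
  have hFn : ∀ i, ‖F i‖ ≤ 2 * r * (3 / 4) ^ i := by
    intro i
    apply ContinuousLinearMap.opNorm_le_bound _ (by positivity)
    intro a
    rw [hFapply]
    calc ‖∑ j ∈ Finset.range (m i), a (Nat.pair i j) • y i j‖
        ≤ ∑ j ∈ Finset.range (m i), ‖a (Nat.pair i j) • y i j‖ := norm_sum_le _ _
      _ ≤ ∑ j ∈ Finset.range (m i), |a (Nat.pair i j)| * (2 * r * (3 / 4) ^ i) := by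
          apply Finset.sum_le_sum
          intro j hj
          rw [norm_smul, Real.norm_eq_abs]
          exact mul_le_mul_of_nonneg_left (hyb i j (Finset.mem_range.1 hj)) (abs_nonneg _)
      _ = (∑ j ∈ Finset.range (m i), |a (Nat.pair i j)|) * (2 * r * (3 / 4) ^ i) := by
          rw [Finset.sum_mul]
      _ ≤ ‖a‖ * (2 * r * (3 / 4) ^ i) := by
          apply mul_le_mul_of_nonneg_right _ (by positivity)
          exact sum_abs_coord_le a _ _ (fun x _ z _ h => (Nat.pair_eq_pair.1 h).2)
      _ = 2 * r * (3 / 4) ^ i * ‖a‖ := by ring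
  have hsum : Summable F := by
    apply Summable.of_norm_bounded ?_ hFn
    exact (summable_geometric_of_lt_one (by norm_num) (by norm_num)).mul_left (2 * r)
  set T : ellOne →L[ℝ] X := ∑' i, F i with hT
  have hTsum : HasSum F T := hsum.hasSum
  refine ⟨T, ?_, ?_⟩
  · -- ApproxOp T
    apply approxOp_of_partial_sums (F := F)
    · intro n
      apply finRankOp_of_range_le
        (s := ⋃ i ∈ Finset.range n, y i '' Set.Iio (m i))
      · exact (Finset.range n).finite_toSet.biUnion
          (fun i _ => (Set.finite_Iio (m i)).image _)
      · intro a
        rw [ContinuousLinearMap.sum_apply]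
        apply Submodule.sum_mem
        intro i hi
        rw [hFapply]
        apply Submodule.sum_mem
        intro j hj
        apply Submodule.smul_mem
        apply Submodule.subset_span
        exact Set.mem_biUnion hi ⟨j, Finset.mem_range.1 hj, rfl⟩
    · exact hTsum.tendsto_sum_nat
  · -- K ⊆ closure (T '' closedBall 0 1)
    have tel : ∀ N, ∀ k ∈ K, ∃ J : ℕ → ℕ, (∀ i ≤ N, J i < m i) ∧
        k - ∑ i ∈ Finset.range (N + 1), g i (J i) ∈ C (N + 1) := by
      intro N
      induction N with
      | zero =>
        intro k hk
        obtain ⟨j, hj, hmem⟩ := hstep 0 k (by rwa [hC0])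
        refine ⟨fun _ => j, fun i hi => ?_, by simpa [Finset.sum_range_one] using hmem⟩
        have hi0 : i = 0 := Nat.le_zero.mp hi
        rw [hi0]; exact hj
      | succ N ih =>
        intro k hk
        obtain ⟨J, hJ, hmem⟩ := ih k hk
        obtain ⟨j', hj', hmem'⟩ := hstep (N + 1) _ hmem
        refine ⟨fun i => if i = N + 1 then j' else J i, ?_, ?_⟩
        · intro i hi
          by_cases h : i = N + 1
          · simp only [h, if_pos]; exact hj'
          · simp only [if_neg h]; exact hJ i (by omega)
        · have hsum2 : ∑ i ∈ Finset.range (N + 1 + 1), g i (if i = N + 1 then j' else J i)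
              = (∑ i ∈ Finset.range (N + 1), g i (J i)) + g (N + 1) j' := by
            rw [Finset.sum_range_succ, if_pos rfl]
            congr 1
            apply Finset.sum_congr rfl
            intro i hi
            rw [if_neg (by have := Finset.mem_range.1 hi; omega)]
          rw [hsum2, ← sub_sub]
          exact hmem'
    intro k hk
    rw [Metric.mem_closure_iff]
    intro ε hε
    obtain ⟨N, hN4⟩ : ∃ N : ℕ, r / ε < 4 ^ N :=
      pow_unbounded_of_one_lt (r / ε) (by norm_num : (1:ℝ) < 4)
    have hN : r / 4 ^ (N + 1) < ε := by
      rw [div_lt_iff₀ (by positivity)]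
      rw [div_lt_iff₀ hε] at hN4
      calc r < 4 ^ N * ε := hN4
        _ ≤ ε * 4 ^ (N + 1) := by
            rw [pow_succ]
            nlinarith [pow_pos (show (0:ℝ) < 4 by norm_num) N, hε]
    obtain ⟨J, hJ, hmem⟩ := tel N k hk
    set a : ellOne := ∑ i ∈ Finset.range (N + 1),
      lp.single 1 (Nat.pair i (J i)) (((2:ℝ) * 3 ^ i)⁻¹) with ha
    have hnorm_single : ∀ (M : ℕ) (c : ℝ), ‖(lp.single 1 M c : ellOne)‖ = |c| := by
      intro M c
      have := lp.norm_single (p := 1) (E := fun _ : ℕ => ℝ) (by simp) M c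
      simpa using this
    have hna : ‖a‖ ≤ 1 := by
      calc ‖a‖ ≤ ∑ i ∈ Finset.range (N + 1),
            ‖(lp.single 1 (Nat.pair i (J i)) (((2:ℝ) * 3 ^ i)⁻¹) : ellOne)‖ :=
            norm_sum_le _ _
        _ = ∑ i ∈ Finset.range (N + 1), ((2:ℝ) * 3 ^ i)⁻¹ := by
            apply Finset.sum_congr rfl
            intro i _
            rw [hnorm_single, abs_of_pos (by positivity)]
        _ ≤ ∑ i ∈ Finset.range (N + 1), (1 / 2) * (1 / 3 : ℝ) ^ i := by
            apply Finset.sum_le_sum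
            intro i _
            rw [mul_inv]
            apply le_of_eq
            rw [div_pow, one_pow]
            ring
        _ = (1 / 2) * ∑ i ∈ Finset.range (N + 1), (1 / 3 : ℝ) ^ i := by
            rw [Finset.mul_sum]
        _ ≤ (1 / 2) * (1 - 1 / 3 : ℝ)⁻¹ := by
            apply mul_le_mul_of_nonneg_left _ (by norm_num)
            rw [← tsum_geometric_of_lt_one (by norm_num) (by norm_num)]
            exact Summable.sum_le_tsum _ (fun i _ => by positivity)
              (summable_geometric_of_lt_one (by norm_num) (by norm_num))
        _ ≤ 1 := by norm_num
    have hTsingle : ∀ i₀, J i₀ < m i₀ →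
        T (lp.single 1 (Nat.pair i₀ (J i₀)) (((2:ℝ) * 3 ^ i₀)⁻¹)) = g i₀ (J i₀) := by
      intro i₀ hi₀
      set c : ℝ := ((2:ℝ) * 3 ^ i₀)⁻¹ with hc
      set M : ℕ := Nat.pair i₀ (J i₀) with hM
      have hcoord : ∀ n : ℕ, ((lp.single 1 M c : ellOne) : ∀ _ : ℕ, ℝ) n
          = if n = M then c else 0 := by
        intro n
        rw [lp.single_apply]
        split_ifs with h <;> simp [h]
      have happ0 := (ContinuousLinearMap.apply ℝ X (lp.single 1 M c)).hasSum hTsum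
      simp only [ContinuousLinearMap.apply_apply] at happ0
      have happ : HasSum (fun i => F i (lp.single 1 M c)) (T (lp.single 1 M c)) := happ0
      have hzero : ∀ i, i ≠ i₀ → F i (lp.single 1 M c) = 0 := by
        intro i hi
        rw [hFapply]
        apply Finset.sum_eq_zero
        intro j hj
        have hne : Nat.pair i j ≠ M := fun h => hi (Nat.pair_eq_pair.1 h).1
        rw [hcoord, if_neg hne, zero_smul]
      have hval : F i₀ (lp.single 1 M c) = g i₀ (J i₀) := by
        rw [hFapply]
        rw [Finset.sum_eq_single_of_mem (J i₀) (Finset.mem_range.2 hi₀)]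
        · rw [hcoord, if_pos rfl, hy, smul_smul, hc, inv_mul_cancel₀ (by positivity), one_smul]
        · intro j _ hjne
          have hne : Nat.pair i₀ j ≠ M := fun h => hjne (Nat.pair_eq_pair.1 h).2
          rw [hcoord, if_neg hne, zero_smul]
      have h2 : HasSum (fun i => F i (lp.single 1 M c)) (F i₀ (lp.single 1 M c)) :=
        hasSum_single i₀ hzero
      rw [happ.unique h2]; exact hval
    have hTa : T a = ∑ i ∈ Finset.range (N + 1), g i (J i) := by
      rw [ha, map_sum]
      apply Finset.sum_congr rfl
      intro i hi
      exact hTsingle i (hJ i (by have := Finset.mem_range.1 hi; omega))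
    refine ⟨T a, ⟨a, ?_, rfl⟩, ?_⟩
    · rwa [mem_closedBall_zero_iff]
    · rw [dist_eq_norm, hTa]
      have h1 := hCb (N + 1) hmem
      rw [mem_closedBall_zero_iff] at h1
      exact lt_of_le_of_lt h1 hN

end Aux

/-- Corollary 1: a Banach space admitting a quotient isomorphic to ℓ₁ has property (F̄). -/
theorem property_F_of_ellOne_quotient
    (X : Type u) [NormedAddCommGroup X] [NormedSpace ℝ X] [CompleteSpace X]
    (Q : Type v) [NormedAddCommGroup Q] [NormedSpace ℝ Q] [CompleteSpace Q]
    (q : X →L[ℝ] Q) (hq : Surjective q) (e : Q ≃L[ℝ] ellOne) :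
    PropertyF X := by
  intro K hK
  obtain ⟨T, hT, hKT⟩ := key hK
  set S : X →L[ℝ] ellOne := (e.toContinuousLinearMap).comp q with hS
  have hSsurj : Function.Surjective S := e.surjective.comp hq
  obtain ⟨Cc, hCc, hlift⟩ := S.exists_preimage_norm_le hSsurj
  set v : X →L[ℝ] X := T.comp (Cc • S) with hv
  refine ⟨v, hT.comp_right _, ?_⟩
  have h1 : T '' closedBall 0 1 ⊆ v '' closedBall 0 1 := by
    rintro _ ⟨a, ha, rfl⟩
    obtain ⟨u, hu, hun⟩ := hlift a
    rw [mem_closedBall_zero_iff] at ha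
    have huC : ‖u‖ ≤ Cc := hun.trans (by nlinarith [norm_nonneg a])
    refine ⟨Cc⁻¹ • u, ?_, ?_⟩
    · rw [mem_closedBall_zero_iff, norm_smul, Real.norm_eq_abs, abs_of_pos (inv_pos.2 hCc),
        inv_mul_le_iff₀ hCc]
      simpa using huC
    · rw [hv]
      simp only [ContinuousLinearMap.comp_apply, ContinuousLinearMap.smul_apply, map_smul]
      rw [smul_smul, inv_mul_cancel₀ (ne_of_gt hCc), one_smul, hu]
  intro k hk
  exact closure_mono h1 (hKT hk)
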